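/- Let k ≥ 4 be an integer with k ≡ 1 (mod 3) or k ≡ 2 (mod 3), and let C_k be the cycle graph on k vertices (so n+m = 2k). Then the congruent-2k3 cycle inequality ∑_{v∈V(C_k)} x_v + ∑_{e∈E(C_k)} y_e ≤ ⌊2k/3⌋ is valid for the Total Matching Polytope P_T(C_k), and it is facet-defining: there exist 2k affinely independent characteristic vectors of total matchings of C_k of cardinality exactly ⌊2k/3⌋. -/

import Mathlib

open Finset

variable {V : Type*}

/-- A total matching of a graph `G`: a set `S` of vertices and a set `M` of edges
such that the elements of `S ∪ M` are pairwise non-adjacent. -/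
def IsTotalMatching (G : SimpleGraph V) (S : Finset V) (M : Finset (Sym2 V)) : Prop :=
  (↑M ⊆ G.edgeSet) ∧
  (∀ v ∈ S, ∀ w ∈ S, ¬ G.Adj v w) ∧
  (∀ e ∈ M, ∀ f ∈ M, e ≠ f → ∀ v : V, ¬(v ∈ e ∧ v ∈ f)) ∧
  (∀ v ∈ S, ∀ e ∈ M, v ∉ e)

/-- Characteristic vector of a total matching, with vertex coordinates and edge coordinates. -/
def charVec [DecidableEq V] (S : Finset V) (M : Finset (Sym2 V)) :
    (V → ℝ) × (Sym2 V → ℝ) :=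
  (fun v => if v ∈ S then 1 else 0, fun e => if e ∈ M then 1 else 0)

/-- The total matching polytope: convex hull of characteristic vectors of total matchings. -/
def totalMatchingPolytope [DecidableEq V] (G : SimpleGraph V) :
    Set ((V → ℝ) × (Sym2 V → ℝ)) :=
  convexHull ℝ {p | ∃ S M, IsTotalMatching G S M ∧ p = charVec S M}

namespace CCIF

lemma neg_one_pow_congr {a b : ℕ} (h : a % 2 = b % 2) : ((-1:ℝ))^a = (-1)^b := by
  conv_lhs => rw [← Nat.div_add_mod a 2]
  conv_rhs => rw [← Nat.div_add_mod b 2]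
  rw [h, pow_add, pow_add, pow_mul, pow_mul, neg_one_sq, one_pow, one_pow]

lemma sum_neg_one_pow (t : ℕ) : ∑ i ∈ range (2*t), ((-1:ℝ))^i = 0 := by
  induction t with
  | zero => simp
  | succ t ih =>
    rw [show 2*(t+1) = (2*t)+1+1 by ring, sum_range_succ, sum_range_succ, ih]
    rw [pow_succ]
    ring

lemma sum_neg_one_pow_odd (t : ℕ) : ∑ i ∈ range (2*t+1), ((-1:ℝ))^i = 1 := by
  rw [sum_range_succ, sum_neg_one_pow, pow_mul, neg_one_sq, one_pow]
  ring

lemma sum_ite_parity (x y : ℝ) (t : ℕ) :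
    ∑ i ∈ range (2*t), (if i % 2 = 0 then x else y) = t * (x + y) := by
  induction t with
  | zero => simp
  | succ t ih =>
    rw [show 2*(t+1) = (2*t)+1+1 by ring, sum_range_succ, sum_range_succ, ih]
    rw [if_pos (by omega), if_neg (by omega)]
    push_cast
    ring

section zmod
variable {n : ℕ} [NeZero n]

lemma cast_eq_cast_iff {a b : ℕ} (ha : a < 2*n) (hb : b < 2*n) :
    ((a : ZMod n) = (b : ZMod n)) ↔ (a = b ∨ a + n = b ∨ b + n = a) := by
  have hn : 0 < n := Nat.pos_of_ne_zero (NeZero.ne n)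
  rw [ZMod.natCast_eq_natCast_iff]
  unfold Nat.ModEq
  constructor
  · intro h
    rcases Nat.lt_or_ge a n with h1 | h1 <;> rcases Nat.lt_or_ge b n with h2 | h2
    · rw [Nat.mod_eq_of_lt h1, Nat.mod_eq_of_lt h2] at h; omega
    · rw [Nat.mod_eq_of_lt h1, Nat.mod_eq_sub_mod h2, Nat.mod_eq_of_lt (by omega)] at h; omega
    · rw [Nat.mod_eq_of_lt h2, Nat.mod_eq_sub_mod h1, Nat.mod_eq_of_lt (by omega)] at h; omega
    · rw [Nat.mod_eq_sub_mod h1, Nat.mod_eq_sub_mod h2,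
        Nat.mod_eq_of_lt (by omega : a - n < n), Nat.mod_eq_of_lt (by omega : b - n < n)] at h
      omega
  · rintro (rfl | h | h)
    · rfl
    · subst h; rw [Nat.add_mod_right]
    · subst h; rw [Nat.add_mod_right]

end zmod


instance nz2k (k : ℕ) [NeZero k] : NeZero (2*k) := ⟨by have := NeZero.ne k; omega⟩

section enc
variable (k : ℕ) [NeZero k]

def vert (p : ZMod (2*k)) : Fin k := ⟨p.val / 2, by have := p.val_lt; omega⟩

def edgeAt (i : Fin k) : Sym2 (Fin k) := s(i, i+1)

def encV (v : Fin k) : ZMod (2*k) := ((2 * v.val : ℕ) : ZMod (2*k))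

def encE (i : Fin k) : ZMod (2*k) := ((2 * i.val + 1 : ℕ) : ZMod (2*k))

def Sset (P : Finset (ZMod (2*k))) : Finset (Fin k) :=
  (P.filter (fun p => p.val % 2 = 0)).image (vert k)

def Mset (P : Finset (ZMod (2*k))) : Finset (Sym2 (Fin k)) :=
  (P.filter (fun p => p.val % 2 = 1)).image (fun p => edgeAt k (vert k p))

variable {k}

lemma kpos (hk : 1 ≤ k) : (0:ℕ) < 2*k := by omega

lemma val_encV (v : Fin k) : (encV k v).val = 2 * v.val :=
  ZMod.val_cast_of_lt (by have := v.isLt; omega)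

lemma val_encE (i : Fin k) : (encE k i).val = 2 * i.val + 1 :=
  ZMod.val_cast_of_lt (by have := i.isLt; omega)

lemma encV_inj {u v : Fin k} (h : encV k u = encV k v) : u = v := by
  have := congrArg ZMod.val h
  rw [val_encV, val_encV] at this
  exact Fin.ext (by omega)

lemma encE_inj {u v : Fin k} (h : encE k u = encE k v) : u = v := by
  have := congrArg ZMod.val h
  rw [val_encE, val_encE] at this
  exact Fin.ext (by omega)

lemma encV_ne_encE (u v : Fin k) : encV k u ≠ encE k v := by
  intro h
  have := congrArg ZMod.val h
  rw [val_encV, val_encE] at this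
  omega

lemma encE_eq (i : Fin k) : encE k i = encV k i + 1 := by
  unfold encE encV
  push_cast
  ring

lemma encV_succ (hk : 2 ≤ k) (v : Fin k) : encV k (v + 1) = encV k v + 2 := by
  unfold encV
  have hval : (v + 1).val = (v.val + 1) % k := by
    rw [Fin.add_def]
    simp only
    rw [Fin.val_one' k, Nat.mod_eq_of_lt (by omega : 1 < k)]
  rw [hval]
  rcases Nat.lt_or_ge (v.val + 1) k with h | h
  · rw [Nat.mod_eq_of_lt h]
    push_cast
    ring
  · have hv : v.val = k - 1 := by have := v.isLt; omega
    have : (v.val + 1) % k = 0 := by rw [show v.val + 1 = k by omega, Nat.mod_self]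
    rw [this]
    have h2 : ((2 * v.val : ℕ) : ZMod (2*k)) + 2 = ((2 * v.val + 2 : ℕ) : ZMod (2*k)) := by
      push_cast; ring
    rw [h2, show 2 * v.val + 2 = 2 * k by omega]
    simp [ZMod.natCast_self]

lemma encE_succ (hk : 2 ≤ k) (i : Fin k) : encE k (i + 1) = encE k i + 2 := by
  rw [encE_eq, encE_eq, encV_succ hk]
  ring

-- reconstruction
lemma encV_vert {p : ZMod (2*k)} (hp : p.val % 2 = 0) : encV k (vert k p) = p := by
  unfold encV vert
  simp only
  rw [show 2 * (p.val / 2) = p.val by omega]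
  exact ZMod.natCast_rightInverse p

lemma encE_vert {p : ZMod (2*k)} (hp : p.val % 2 = 1) : encE k (vert k p) = p := by
  unfold encE vert
  simp only
  rw [show 2 * (p.val / 2) + 1 = p.val by omega]
  exact ZMod.natCast_rightInverse p

lemma vert_encV (v : Fin k) : vert k (encV k v) = v := by
  apply Fin.ext
  show (encV k v).val / 2 = v.val
  rw [val_encV]
  omega

lemma vert_encE (i : Fin k) : vert k (encE k i) = i := by
  apply Fin.ext
  show (encE k i).val / 2 = i.val
  rw [val_encE]
  omega

lemma edgeAt_inj (hk : 3 ≤ k) {i j : Fin k} (h : edgeAt k i = edgeAt k j) : i = j := by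
  unfold edgeAt at h
  rw [Sym2.eq_iff] at h
  rcases h with ⟨h1, _⟩ | ⟨h1, h2⟩
  · exact h1
  · exfalso
    have h4 : i + (1 + 1) = i + 0 := by rw [← add_assoc, add_zero, h2, ← h1]
    have h3 : ((1:Fin k) + 1) = 0 := add_left_cancel h4
    have h5 := congrArg Fin.val h3
    rw [Fin.add_def] at h5
    simp only [Fin.val_one' k, Fin.val_zero] at h5
    rw [Nat.mod_eq_of_lt (by omega : 1 < k)] at h5
    rw [Nat.mod_eq_of_lt (by omega : 1 + 1 < k)] at h5
    omega

lemma mem_Sset {P : Finset (ZMod (2*k))} {v : Fin k} :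
    v ∈ Sset k P ↔ encV k v ∈ P := by
  unfold Sset
  simp only [mem_image, mem_filter]
  constructor
  · rintro ⟨p, ⟨hp, hpar⟩, rfl⟩
    rwa [encV_vert hpar]
  · intro h
    exact ⟨encV k v, ⟨h, by rw [val_encV]; omega⟩, vert_encV v⟩

lemma mem_Mset (hk : 3 ≤ k) {P : Finset (ZMod (2*k))} {i : Fin k} :
    edgeAt k i ∈ Mset k P ↔ encE k i ∈ P := by
  unfold Mset
  simp only [mem_image, mem_filter]
  constructor
  · rintro ⟨p, ⟨hp, hpar⟩, heq⟩
    have := edgeAt_inj hk heq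
    rw [← this, encE_vert hpar]
    exact hp
  · intro h
    exact ⟨encE k i, ⟨h, by rw [val_encE]; omega⟩, by rw [vert_encE]⟩

lemma card_SM (hk : 3 ≤ k) (P : Finset (ZMod (2*k))) :
    (Sset k P).card + (Mset k P).card = P.card := by
  unfold Sset Mset
  rw [card_image_of_injOn, card_image_of_injOn]
  · have he : P.filter (fun p => p.val % 2 = 1) = P.filter (fun p => ¬ (p.val % 2 = 0)) := by
      apply filter_congr
      intro x _
      constructor <;> omega
    rw [he]
    exact card_filter_add_card_filter_not _
  · intro p hp q hq h
    simp only [coe_filter, Set.mem_setOf_eq] at hp hq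
    have h2 := edgeAt_inj hk h
    have hv : p.val / 2 = q.val / 2 := congrArg Fin.val h2
    have : p.val = q.val := by omega
    calc p = ((p.val : ℕ) : ZMod (2*k)) := (ZMod.natCast_rightInverse p).symm
    _ = ((q.val : ℕ) : ZMod (2*k)) := by rw [this]
    _ = q := ZMod.natCast_rightInverse q
  · intro p hp q hq h
    simp only [coe_filter, Set.mem_setOf_eq] at hp hq
    have hv : p.val / 2 = q.val / 2 := congrArg Fin.val h
    have : p.val = q.val := by omega
    calc p = ((p.val : ℕ) : ZMod (2*k)) := (ZMod.natCast_rightInverse p).symm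
    _ = ((q.val : ℕ) : ZMod (2*k)) := by rw [this]
    _ = q := ZMod.natCast_rightInverse q


lemma adj_iff (hk : 2 ≤ k) {u v : Fin k} :
    (SimpleGraph.cycleGraph k).Adj u v ↔ v = u + 1 ∨ u = v + 1 := by
  rw [SimpleGraph.cycleGraph_adj']
  have key : ∀ a b : Fin k, (a - b).val = 1 ↔ a = b + 1 := by
    intro a b
    constructor
    · intro h
      have h1 : a - b = 1 := by
        apply Fin.ext
        rw [h, Fin.val_one' k, Nat.mod_eq_of_lt (by omega : 1 < k)]
      rw [sub_eq_iff_eq_add] at h1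
      rw [h1, add_comm]
    · intro h
      subst h
      rw [add_sub_cancel_left, Fin.val_one' k, Nat.mod_eq_of_lt (by omega : 1 < k)]
  rw [key, key]
  tauto

lemma totalMatching_of_gap3 (hk : 4 ≤ k) (P : Finset (ZMod (2*k)))
    (hgap : ∀ p ∈ P, p + 1 ∉ P ∧ p + 2 ∉ P) :
    IsTotalMatching (SimpleGraph.cycleGraph k) (Sset k P) (Mset k P) := by
  have hk2 : 2 ≤ k := by omega
  have hk3 : 3 ≤ k := by omega
  refine ⟨?_, ?_, ?_, ?_⟩
  · -- edges
    intro e he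
    rw [mem_coe] at he
    unfold Mset at he
    rw [mem_image] at he
    obtain ⟨p, hp, rfl⟩ := he
    show s(vert k p, vert k p + 1) ∈ (SimpleGraph.cycleGraph k).edgeSet
    rw [SimpleGraph.mem_edgeSet, adj_iff hk2]
    left; rfl
  · -- vertex independence
    intro u hu v hv hadj
    rw [adj_iff hk2] at hadj
    rw [mem_Sset] at hu hv
    rcases hadj with rfl | rfl
    · rw [encV_succ hk2] at hv
      exact (hgap _ hu).2 hv
    · rw [encV_succ hk2] at hu
      exact (hgap _ hv).2 hu
  · -- edge disjointness
    intro e he f hf hne v hv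
    unfold Mset at he hf
    rw [mem_image] at he hf
    obtain ⟨p, hp, rfl⟩ := he
    obtain ⟨q, hq, rfl⟩ := hf
    rw [mem_filter] at hp hq
    set i := vert k p with hi
    set j := vert k q with hj
    have hpi : encE k i = p := encE_vert hp.2
    have hqj : encE k j = q := encE_vert hq.2
    have hij : i ≠ j := fun h => hne (by rw [h])
    obtain ⟨hv1, hv2⟩ := hv
    unfold edgeAt at hv1 hv2
    rw [Sym2.mem_iff] at hv1 hv2
    rcases hv1 with rfl | rfl <;> rcases hv2 with h2 | h2
    · exact hij h2
    · -- v = i, i = j + 1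
      rw [h2] at hpi
      rw [encE_succ hk2] at hpi
      rw [hqj] at hpi
      exact (hgap q hq.1).2 (by rw [hpi]; exact hp.1)
    · -- v = i+1 = j
      rw [← h2] at hqj
      rw [encE_succ hk2] at hqj
      rw [hpi] at hqj
      exact (hgap p hp.1).2 (by rw [hqj]; exact hq.1)
    · exact hij (add_right_cancel h2)
  · -- vertex-edge
    intro v hv e he hve
    unfold Mset at he
    rw [mem_image] at he
    obtain ⟨p, hp, rfl⟩ := he
    rw [mem_filter] at hp
    set i := vert k p with hi
    have hpi : encE k i = p := encE_vert hp.2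
    rw [mem_Sset] at hv
    unfold edgeAt at hve
    rw [Sym2.mem_iff] at hve
    rcases hve with rfl | rfl
    · -- v = i
      have h1 : encV k i + 1 ∈ P := by rw [← encE_eq, hpi]; exact hp.1
      exact (hgap _ hv).1 h1
    · -- v = i + 1
      have h2 : encV k (i + 1) = p + 1 := by
        rw [encV_succ hk2, ← hpi, encE_eq]
        ring
      rw [h2] at hv
      exact (hgap p hp.1).1 hv


section valid
variable {S : Finset (Fin k)} {M : Finset (Sym2 (Fin k))}

def Dset (k : ℕ) [NeZero k] (S : Finset (Fin k)) (M : Finset (Sym2 (Fin k))) :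
    Finset (ZMod (2*k)) :=
  S.image (encV k) ∪ (univ.filter (fun i => edgeAt k i ∈ M)).image (encE k)

lemma mem_Dset {p : ZMod (2*k)} :
    p ∈ Dset k S M ↔ (∃ v ∈ S, encV k v = p) ∨ (∃ i : Fin k, edgeAt k i ∈ M ∧ encE k i = p) := by
  unfold Dset
  simp only [mem_union, mem_image, mem_filter, mem_univ, true_and]

lemma card_Dset (hk : 3 ≤ k)
    (hTM : IsTotalMatching (SimpleGraph.cycleGraph k) S M) :
    (Dset k S M).card = S.card + M.card := by
  have hk2 : 2 ≤ k := by omega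
  unfold Dset
  rw [card_union_of_disjoint, card_image_of_injOn (fun a _ b _ h => encV_inj h),
    card_image_of_injOn (fun a _ b _ h => encE_inj h)]
  · congr 1
    have himg : (univ.filter (fun i => edgeAt k i ∈ M)).image (edgeAt k) = M := by
      ext e
      rw [mem_image]
      constructor
      · rintro ⟨i, hi, rfl⟩
        exact (mem_filter.mp hi).2
      · intro he
        have hes : e ∈ (SimpleGraph.cycleGraph k).edgeSet := hTM.1 he
        induction e using Sym2.ind with
        | _ u v =>
          rw [SimpleGraph.mem_edgeSet, adj_iff hk2] at hes
          rcases hes with rfl | rfl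
          · exact ⟨u, mem_filter.mpr ⟨mem_univ _, he⟩, rfl⟩
          · exact ⟨v, mem_filter.mpr ⟨mem_univ _, by unfold edgeAt; rw [Sym2.eq_swap]; exact he⟩,
              by unfold edgeAt; rw [Sym2.eq_swap]⟩
    calc (univ.filter (fun i => edgeAt k i ∈ M)).card
        = ((univ.filter (fun i => edgeAt k i ∈ M)).image (edgeAt k)).card :=
          (card_image_of_injOn (fun a _ b _ h => edgeAt_inj hk h)).symm
      _ = M.card := by rw [himg]
  · rw [disjoint_left]
    rintro p hp hq
    rw [mem_image] at hp hq
    obtain ⟨v, _, rfl⟩ := hp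
    obtain ⟨i, _, hi⟩ := hq
    exact encV_ne_encE v i hi.symm

lemma gap_Dset (hk : 4 ≤ k)
    (hTM : IsTotalMatching (SimpleGraph.cycleGraph k) S M) :
    ∀ p ∈ Dset k S M, p + 1 ∉ Dset k S M ∧ p + 2 ∉ Dset k S M := by
  have hk2 : 2 ≤ k := by omega
  have hk3 : 3 ≤ k := by omega
  intro p hp
  rw [mem_Dset] at hp
  constructor
  · intro hq
    rw [mem_Dset] at hq
    rcases hp with ⟨v, hv, rfl⟩ | ⟨i, hi, rfl⟩ <;>
      rcases hq with ⟨u, hu, hu2⟩ | ⟨j, hj, hj2⟩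
    · -- encV u = encV v + 1 = encE v
      rw [← encE_eq] at hu2
      exact encV_ne_encE u v hu2
    · -- encE j = encV v + 1 = encE v ⇒ j = v
      rw [← encE_eq] at hj2
      have hjv := encE_inj hj2
      rw [hjv] at hj
      exact hTM.2.2.2 v hv _ hj (Sym2.mem_iff.mpr (Or.inl rfl))
    · -- encV u = encE i + 1 = encV (i+1) ⇒ u = i + 1
      have h2 : encE k i + 1 = encV k (i + 1) := by rw [encV_succ hk2, encE_eq]; ring
      rw [h2] at hu2
      have hui := encV_inj hu2
      rw [hui] at hu
      exact hTM.2.2.2 _ hu _ hi (Sym2.mem_iff.mpr (Or.inr rfl))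
    · -- encE j = encE i + 1 = encV (i+1)
      have h2 : encE k i + 1 = encV k (i + 1) := by rw [encV_succ hk2, encE_eq]; ring
      rw [h2] at hj2
      exact encV_ne_encE (i+1) j hj2.symm
  · intro hq
    rw [mem_Dset] at hq
    rcases hp with ⟨v, hv, rfl⟩ | ⟨i, hi, rfl⟩ <;>
      rcases hq with ⟨u, hu, hu2⟩ | ⟨j, hj, hj2⟩
    · -- encV u = encV v + 2 = encV (v+1) ⇒ Adj
      rw [← encV_succ hk2] at hu2
      have huv := encV_inj hu2
      rw [huv] at hu
      exact hTM.2.1 v hv _ hu ((adj_iff hk2).mpr (Or.inl rfl))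
    · -- encE j = encV v + 2 = encV (v+1)
      rw [← encV_succ hk2] at hj2
      exact encV_ne_encE (v+1) j hj2.symm
    · -- encV u = encE i + 2 = encE (i+1)
      have h2 : encE k i + 2 = encE k (i+1) := (encE_succ hk2 i).symm
      rw [h2] at hu2
      exact encV_ne_encE u (i+1) hu2
    · -- encE j = encE i + 2 = encE (i+1) ⇒ j = i+1; edges share vertex i+1
      have h2 : encE k i + 2 = encE k (i+1) := (encE_succ hk2 i).symm
      rw [h2] at hj2
      have := encE_inj hj2
      subst this
      have hne : edgeAt k i ≠ edgeAt k (i+1) := by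
        intro h
        have heq := edgeAt_inj hk3 h
        have h0 : i.val = (i.val + (1 : Fin k).val) % k := by
          conv_lhs => rw [heq]
          rw [Fin.add_def]
        rw [Fin.val_one' k, Nat.mod_eq_of_lt (by omega : 1 < k)] at h0
        rcases Nat.lt_or_ge (i.val + 1) k with hlt | hge
        · rw [Nat.mod_eq_of_lt hlt] at h0; omega
        · have hik := i.isLt
          rw [show i.val + 1 = k by omega, Nat.mod_self] at h0
          omega
      exact hTM.2.2.1 _ hi _ hj hne (i+1)
        ⟨Sym2.mem_iff.mpr (Or.inr rfl), Sym2.mem_iff.mpr (Or.inl rfl)⟩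

end valid

end enc

section blocks
variable {n : ℕ} [NeZero n]

lemma gap3_card (hn : 3 ≤ n) (D : Finset (ZMod n))
    (hgap : ∀ p ∈ D, p + 1 ∉ D ∧ p + 2 ∉ D) : 3 * D.card ≤ n := by
  classical
  have hco : ∀ a b : ℕ, a < n → b < n → ((a : ZMod n) = (b : ZMod n)) → a = b := by
    intro a b ha hb h
    have := congrArg ZMod.val h
    rwa [ZMod.val_cast_of_lt ha, ZMod.val_cast_of_lt hb] at this
  have e01 : (0 : ZMod n) ≠ 1 := by
    intro h
    have : ((0:ℕ) : ZMod n) = ((1:ℕ) : ZMod n) := by push_cast; exact h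
    have := hco _ _ (by omega) (by omega) this
    omega
  have e02 : (0 : ZMod n) ≠ 2 := by
    intro h
    have : ((0:ℕ) : ZMod n) = ((2:ℕ) : ZMod n) := by push_cast; exact h
    have := hco _ _ (by omega) (by omega) this
    omega
  have e12 : (1 : ZMod n) ≠ 2 := by
    intro h
    have : ((1:ℕ) : ZMod n) = ((2:ℕ) : ZMod n) := by push_cast; exact h
    have := hco _ _ (by omega) (by omega) this
    omega
  set B : ZMod n → Finset (ZMod n) := fun p => {p, p+1, p+2} with hB
  have hcard : ∀ p, (B p).card = 3 := by
    intro p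
    rw [hB]
    rw [card_insert_of_notMem, card_insert_of_notMem, card_singleton]
    · simp only [mem_singleton]
      intro h
      exact e12 (add_left_cancel h)
    · simp only [mem_insert, mem_singleton]
      rintro (h | h)
      · exact e01 (add_left_cancel (show p + 0 = p + 1 by rw [add_zero]; exact h))
      · exact e02 (add_left_cancel (show p + 0 = p + 2 by rw [add_zero]; exact h))
  have step : ∀ p ∈ D, ∀ q ∈ D, p ≠ q → Disjoint (B p) (B q) := by
    intro p hp q hq hpq
    rw [disjoint_left]
    intro x hx hx'
    rw [hB] at hx hx'
    simp only [mem_insert, mem_singleton] at hx hx'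
    have hg1 := hgap p hp
    have hg2 := hgap q hq
    rcases hx with rfl | rfl | rfl <;> rcases hx' with h | h | h
    · exact hpq h
    · exact hg2.1 (by rw [← h]; exact hp)
    · exact hg2.2 (by rw [← h]; exact hp)
    · exact hg1.1 (by rw [h]; exact hq)
    · exact hpq (add_right_cancel h)
    · refine hg2.1 ?_
      have h' : p + 1 = (q + 1) + 1 := by rw [h]; ring
      rw [add_right_cancel h'] at hp
      exact hp
    · exact hg1.2 (by rw [h]; exact hq)
    · refine hg1.1 ?_
      have h' : (p + 1) + 1 = q + 1 := by rw [← h]; ring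
      rw [← add_right_cancel h'] at hq
      exact hq
    · exact hpq (add_right_cancel h)
  calc 3 * D.card = ∑ p ∈ D, (B p).card := by
        rw [Finset.sum_congr rfl (fun p _ => hcard p), Finset.sum_const, smul_eq_mul, mul_comm]
    _ = (D.biUnion B).card := (Finset.card_biUnion step).symm
    _ ≤ (univ : Finset (ZMod n)).card := card_le_card (subset_univ _)
    _ = n := by rw [card_univ, ZMod.card]

end blocks

section fam
variable (k m : ℕ) [NeZero k]

def Tfam (s : ZMod (2*k)) : Finset (ZMod (2*k)) :=
  (range m).image (fun i => s + ((3*i : ℕ) : ZMod (2*k)))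

def Bset : Finset (ZMod (2*k)) :=
  insert 0 ((range (m-1)).image (fun i => ((4 + 3*i : ℕ) : ZMod (2*k))))

variable {k m}

lemma mem_Tfam {s p : ZMod (2*k)} :
    p ∈ Tfam k m s ↔ ∃ i < m, s + ((3*i : ℕ) : ZMod (2*k)) = p := by
  simp [Tfam, mem_image, mem_range]

lemma mem_Bset {p : ZMod (2*k)} :
    p ∈ Bset k m ↔ p = 0 ∨ ∃ i < m - 1, ((4 + 3*i : ℕ) : ZMod (2*k)) = p := by
  simp [Bset, mem_insert, mem_image, mem_range, eq_comm]

lemma gap_Tfam (hk : 1 ≤ k) (hm : 3*m < 2*k) (s : ZMod (2*k)) :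
    ∀ p ∈ Tfam k m s, p + 1 ∉ Tfam k m s ∧ p + 2 ∉ Tfam k m s := by
  intro p hp
  rw [mem_Tfam] at hp
  obtain ⟨i, hi, rfl⟩ := hp
  constructor
  · intro h
    rw [mem_Tfam] at h
    obtain ⟨j, hj, hj2⟩ := h
    have h3 : s + ((3*j : ℕ) : ZMod (2*k)) = s + ((3*i+1 : ℕ) : ZMod (2*k)) := by
      rw [hj2]; push_cast; ring
    have h4 := add_left_cancel h3
    rcases (cast_eq_cast_iff (by omega) (by omega)).mp h4 with h5 | h5 | h5 <;> omega
  · intro h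
    rw [mem_Tfam] at h
    obtain ⟨j, hj, hj2⟩ := h
    have h3 : s + ((3*j : ℕ) : ZMod (2*k)) = s + ((3*i+2 : ℕ) : ZMod (2*k)) := by
      rw [hj2]; push_cast; ring
    have h4 := add_left_cancel h3
    rcases (cast_eq_cast_iff (by omega) (by omega)).mp h4 with h5 | h5 | h5 <;> omega

lemma card_Tfam (hm : 3*m < 2*k) (s : ZMod (2*k)) : (Tfam k m s).card = m := by
  rw [Tfam, card_image_of_injOn, card_range]
  intro i hi j hj h
  rw [mem_coe, mem_range] at hi hj
  have h4 := add_left_cancel h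
  rcases (cast_eq_cast_iff (by omega) (by omega)).mp h4 with h5 | h5 | h5 <;> omega

lemma gap_Bset (hk : 1 ≤ k) (hmm : 2*k = 3*m+2) (hm2 : 2 ≤ m) :
    ∀ p ∈ Bset k m, p + 1 ∉ Bset k m ∧ p + 2 ∉ Bset k m := by
  have hz : (0 : ZMod (2*k)) = ((0:ℕ) : ZMod (2*k)) := by norm_cast
  intro p hp
  rw [mem_Bset] at hp
  rcases hp with rfl | ⟨i, hi, rfl⟩
  · constructor
    · intro h
      rw [mem_Bset] at h
      rcases h with h | ⟨j, hj, hj2⟩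
      · have h' : ((1:ℕ) : ZMod (2*k)) = ((0:ℕ) : ZMod (2*k)) := by
          push_cast
          linear_combination h
        rcases (cast_eq_cast_iff (by omega) (by omega)).mp h' with h5 | h5 | h5 <;> omega
      · have h' : ((4+3*j:ℕ) : ZMod (2*k)) = ((1:ℕ) : ZMod (2*k)) := by
          push_cast at hj2 ⊢
          linear_combination hj2
        rcases (cast_eq_cast_iff (by omega) (by omega)).mp h' with h5 | h5 | h5 <;> omega
    · intro h
      rw [mem_Bset] at h
      rcases h with h | ⟨j, hj, hj2⟩
      · have h' : ((2:ℕ) : ZMod (2*k)) = ((0:ℕ) : ZMod (2*k)) := by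
          push_cast
          linear_combination h
        rcases (cast_eq_cast_iff (by omega) (by omega)).mp h' with h5 | h5 | h5 <;> omega
      · have h' : ((4+3*j:ℕ) : ZMod (2*k)) = ((2:ℕ) : ZMod (2*k)) := by
          push_cast at hj2 ⊢
          linear_combination hj2
        rcases (cast_eq_cast_iff (by omega) (by omega)).mp h' with h5 | h5 | h5 <;> omega
  · have he1 : ((4+3*i:ℕ) : ZMod (2*k)) + 1 = ((5+3*i:ℕ) : ZMod (2*k)) := by push_cast; ring
    have he2 : ((4+3*i:ℕ) : ZMod (2*k)) + 2 = ((6+3*i:ℕ) : ZMod (2*k)) := by push_cast; ring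
    constructor
    · intro h
      rw [mem_Bset, he1] at h
      rcases h with h | ⟨j, hj, hj2⟩
      · rw [hz] at h
        rcases (cast_eq_cast_iff (by omega) (by omega)).mp h with h5 | h5 | h5 <;> omega
      · rcases (cast_eq_cast_iff (by omega) (by omega)).mp hj2 with h5 | h5 | h5 <;> omega
    · intro h
      rw [mem_Bset, he2] at h
      rcases h with h | ⟨j, hj, hj2⟩
      · rw [hz] at h
        rcases (cast_eq_cast_iff (by omega) (by omega)).mp h with h5 | h5 | h5 <;> omega
      · rcases (cast_eq_cast_iff (by omega) (by omega)).mp hj2 with h5 | h5 | h5 <;> omega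

lemma card_Bset (hmm : 2*k = 3*m+2) (hm2 : 2 ≤ m) : (Bset k m).card = m := by
  rw [Bset, card_insert_of_notMem, card_image_of_injOn, card_range]
  · omega
  · intro i hi j hj h
    rw [mem_coe, mem_range] at hi hj
    rcases (cast_eq_cast_iff (by omega) (by omega)).mp h with h5 | h5 | h5 <;> omega
  · intro h
    rw [mem_image] at h
    obtain ⟨i, hi, hi2⟩ := h
    rw [mem_range] at hi
    rw [show (0 : ZMod (2*k)) = ((0:ℕ) : ZMod (2*k)) by norm_cast] at hi2
    rcases (cast_eq_cast_iff (by omega) (by omega)).mp hi2 with h5 | h5 | h5 <;> omega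

lemma Tfam_inj (h2k : 2*k % 3 ≠ 0) (hm : 3*m < 2*k) (hm1 : 1 ≤ m)
    {s t : ZMod (2*k)} (h : Tfam k m s = Tfam k m t) : s = t := by
  have hs : s ∈ Tfam k m s := mem_Tfam.mpr ⟨0, hm1, by norm_num⟩
  have ht : t ∈ Tfam k m t := mem_Tfam.mpr ⟨0, hm1, by norm_num⟩
  rw [h] at hs
  rw [← h] at ht
  rw [mem_Tfam] at hs ht
  obtain ⟨i, hi, hi2⟩ := hs
  obtain ⟨j, hj, hj2⟩ := ht
  have hij : s + ((3*(i+j) : ℕ) : ZMod (2*k)) = s + ((0:ℕ) : ZMod (2*k)) := by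
    conv_lhs => rw [show ((3*(i+j):ℕ) : ZMod (2*k)) = ((3*j:ℕ):ZMod (2*k)) + ((3*i:ℕ):ZMod (2*k))
      by push_cast; ring, ← add_assoc, hj2, hi2]
    push_cast
    ring
  have h4 := add_left_cancel hij
  have : i = 0 ∧ j = 0 := by
    rcases (cast_eq_cast_iff (by omega) (by omega)).mp h4 with h5 | h5 | h5 <;> omega
  rw [← hi2, this.1]
  push_cast
  ring

lemma Tfam_ne_Bset (hmm : 2*k = 3*m+2) (hm2 : 2 ≤ m) (s : ZMod (2*k)) :
    Tfam k m s ≠ Bset k m := by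
  intro h
  have h0 : (0 : ZMod (2*k)) ∈ Tfam k m s := by
    rw [h, mem_Bset]; left; rfl
  have h4 : ((4:ℕ) : ZMod (2*k)) ∈ Tfam k m s := by
    rw [h, mem_Bset]; right; exact ⟨0, by omega, by norm_num⟩
  rw [mem_Tfam] at h0 h4
  obtain ⟨i, hi, hi2⟩ := h0
  obtain ⟨j, hj, hj2⟩ := h4
  have hd : s + ((3*j : ℕ) : ZMod (2*k)) = s + ((3*i + 4 : ℕ) : ZMod (2*k)) := by
    rw [hj2]
    conv_rhs => rw [show ((3*i+4:ℕ) : ZMod (2*k)) = ((3*i:ℕ):ZMod (2*k)) + ((4:ℕ):ZMod (2*k))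
      by push_cast; ring, ← add_assoc, hi2]
    rw [zero_add]
  have h5 := add_left_cancel hd
  rcases (cast_eq_cast_iff (by omega) (by omega)).mp h5 with h6 | h6 | h6 <;> omega


lemma filter_Tfam (hm : 3*m < 2*k) (p : ZMod (2*k)) :
    univ.filter (fun s => p ∈ Tfam k m s)
      = (range m).image (fun i => p - ((3*i:ℕ) : ZMod (2*k))) := by
  ext s
  rw [mem_filter, mem_image]
  simp only [mem_univ, true_and, mem_Tfam]
  constructor
  · rintro ⟨i, hi, hi2⟩
    exact ⟨i, mem_range.mpr hi, by rw [← hi2]; ring⟩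
  · rintro ⟨i, hi, rfl⟩
    exact ⟨i, mem_range.mp hi, by ring⟩

lemma sum_Tfam (hm : 3*m < 2*k) (w : ZMod (2*k) → ℝ) (p : ZMod (2*k)) :
    ∑ s : ZMod (2*k), w s * (if p ∈ Tfam k m s then 1 else 0)
      = ∑ i ∈ range m, w (p - ((3*i:ℕ) : ZMod (2*k))) := by
  simp only [mul_ite, mul_one, mul_zero]
  rw [← Finset.sum_filter, filter_Tfam hm, Finset.sum_image]
  intro i hi j hj h
  rw [mem_coe, mem_range] at hi hj
  rw [sub_right_inj] at h
  rcases (cast_eq_cast_iff (by omega) (by omega)).mp h with h5 | h5 | h5 <;> omega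

lemma keyshift (hm1 : 1 ≤ m) (w : ZMod (2*k) → ℝ)
    (hE : ∀ p : ZMod (2*k), ∑ i ∈ range m, w (p - ((3*i:ℕ):ZMod (2*k))) = 0) :
    ∀ p, w (p + ((3:ℕ) : ZMod (2*k))) = w (p - ((3*(m-1):ℕ) : ZMod (2*k))) := by
  intro p
  obtain ⟨t, rfl⟩ : ∃ t, m = t + 1 := ⟨m-1, by omega⟩
  have h1 := hE p
  have h2 := hE (p + ((3:ℕ) : ZMod (2*k)))
  rw [sum_range_succ] at h1
  rw [sum_range_succ'] at h2
  have he : ∀ i : ℕ, p + ((3:ℕ):ZMod (2*k)) - ((3*(i+1):ℕ):ZMod (2*k))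
      = p - ((3*i:ℕ):ZMod (2*k)) := by
    intro i; push_cast; ring
  rw [Finset.sum_congr rfl (fun i _ => by rw [he i])] at h2
  have he0 : p + ((3:ℕ):ZMod (2*k)) - ((3*0:ℕ):ZMod (2*k)) = p + ((3:ℕ):ZMod (2*k)) := by
    push_cast; ring
  rw [he0] at h2
  rw [show (t+1)-1 = t from rfl]
  linarith

lemma kernel1 (hmm : 2*k = 3*m + 1) (hm1 : 1 ≤ m) (w : ZMod (2*k) → ℝ)
    (hE : ∀ p, ∑ s : ZMod (2*k), w s * (if p ∈ Tfam k m s then 1 else 0) = 0) :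
    ∀ s, w s = 0 := by
  have hm : 3*m < 2*k := by omega
  have hE' : ∀ p, ∑ i ∈ range m, w (p - ((3*i:ℕ):ZMod (2*k))) = 0 := fun p => by
    rw [← sum_Tfam hm]; exact hE p
  have hkey := keyshift hm1 w hE'
  have hneg : ((3*(m-1):ℕ) : ZMod (2*k)) = -((4:ℕ) : ZMod (2*k)) := by
    have h0 : ((3*(m-1) + 4 : ℕ) : ZMod (2*k)) = 0 := by
      rw [show 3*(m-1) + 4 = 2*k by omega]; exact ZMod.natCast_self _
    push_cast at h0 ⊢
    linear_combination h0
  have hstep : ∀ q : ZMod (2*k), w q = w (q + 1) := by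
    intro q
    have h := hkey (q - ((3:ℕ):ZMod (2*k)))
    rw [hneg] at h
    have l : q - ((3:ℕ):ZMod (2*k)) + ((3:ℕ):ZMod (2*k)) = q := by ring
    have r : q - ((3:ℕ):ZMod (2*k)) - (-((4:ℕ):ZMod (2*k))) = q + 1 := by push_cast; ring
    rw [l, r] at h
    exact h
  have hconst : ∀ t:ℕ, ∀ q : ZMod (2*k), w q = w (q + ((t:ℕ) : ZMod (2*k))) := by
    intro t
    induction t with
    | zero => intro q; norm_num
    | succ t ih =>
      intro q
      calc w q = w (q + ((t:ℕ) : ZMod (2*k))) := ih q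
      _ = w (q + ((t:ℕ) : ZMod (2*k)) + 1) := hstep _
      _ = w (q + (((t+1:ℕ)) : ZMod (2*k))) := by
            congr 1
            push_cast
            ring
  have hall : ∀ s : ZMod (2*k), w s = w 0 := by
    intro s
    have h := hconst s.val 0
    rw [zero_add, (ZMod.natCast_rightInverse s : ((s.val:ℕ) : ZMod (2*k)) = s)] at h
    exact h.symm
  have h0 := hE' 0
  rw [Finset.sum_congr rfl (fun i (_ : i ∈ range m) => hall _), Finset.sum_const,
    card_range] at h0
  have hw0 : w 0 = 0 := by
    have : (m : ℝ) ≠ 0 := Nat.cast_ne_zero.mpr (by omega)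
    simp only [nsmul_eq_mul] at h0
    exact (mul_eq_zero.mp h0).resolve_left this
  intro s
  rw [hall s, hw0]

def eps (k : ℕ) (p : ZMod (2*k)) : ℝ := (-1)^(p.val)

lemma eps_add (p : ZMod (2*k)) (t : ℕ) :
    eps k (p + ((t:ℕ) : ZMod (2*k))) = eps k p * (-1)^t := by
  unfold eps
  rw [← pow_add]
  apply neg_one_pow_congr
  rw [ZMod.val_add, ZMod.val_natCast]
  have h2 : (2:ℕ) ∣ 2*k := ⟨k, rfl⟩
  rw [Nat.mod_mod_of_dvd _ h2]
  conv_rhs => rw [Nat.add_mod]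
  rw [Nat.add_mod p.val (t % (2*k)), Nat.mod_mod_of_dvd _ h2]

lemma eps_zero : eps k 0 = 1 := by
  unfold eps
  rw [ZMod.val_zero, pow_zero]

lemma eps_cast (t : ℕ) : eps k ((t:ℕ) : ZMod (2*k)) = (-1)^t := by
  have h := eps_add (0 : ZMod (2*k)) t
  rwa [zero_add, eps_zero, one_mul] at h

lemma phi_Tfam (hm : 3*m < 2*k) (hme : m % 2 = 0) (s : ZMod (2*k)) :
    ∑ p ∈ Tfam k m s, eps k p = 0 := by
  rw [Tfam, Finset.sum_image (fun i hi j hj h => by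
    rw [mem_coe, mem_range] at hi hj
    have h4 := add_left_cancel h
    rcases (cast_eq_cast_iff (by omega) (by omega)).mp h4 with h5 | h5 | h5 <;> omega)]
  calc ∑ i ∈ range m, eps k (s + ((3*i:ℕ) : ZMod (2*k)))
      = ∑ i ∈ range m, eps k s * (-1)^i := by
        refine Finset.sum_congr rfl (fun i _ => ?_)
        rw [eps_add]
        congr 1
        exact neg_one_pow_congr (by omega)
    _ = eps k s * ∑ i ∈ range m, ((-1:ℝ))^i := by rw [mul_sum]
    _ = 0 := by rw [show m = 2*(m/2) by omega, sum_neg_one_pow]; ring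

lemma phi_Bset (hmm : 2*k = 3*m+2) (hme : m % 2 = 0) (hm2 : 2 ≤ m) :
    ∑ p ∈ Bset k m, eps k p = 2 := by
  rw [Bset, Finset.sum_insert, Finset.sum_image (fun i hi j hj h => by
    rw [mem_coe, mem_range] at hi hj
    rcases (cast_eq_cast_iff (by omega) (by omega)).mp h with h5 | h5 | h5 <;> omega)]
  · rw [eps_zero]
    have : ∑ i ∈ range (m-1), eps k ((4+3*i : ℕ) : ZMod (2*k))
        = ∑ i ∈ range (m-1), ((-1:ℝ))^i := by
      refine Finset.sum_congr rfl (fun i _ => ?_)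
      rw [eps_cast]
      exact neg_one_pow_congr (by omega)
    rw [this, show m - 1 = 2*((m-2)/2)+1 by omega, sum_neg_one_pow_odd]
    norm_num
  · intro h
    rw [mem_image] at h
    obtain ⟨i, hi, hi2⟩ := h
    rw [mem_range] at hi
    rw [show (0 : ZMod (2*k)) = ((0:ℕ) : ZMod (2*k)) by norm_cast] at hi2
    rcases (cast_eq_cast_iff (by omega) (by omega)).mp hi2 with h5 | h5 | h5 <;> omega

lemma kernel2 (hmm : 2*k = 3*m + 2) (hme : m % 2 = 0) (hm2 : 2 ≤ m) (w : ZMod (2*k) → ℝ)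
    (hE : ∀ p, ∑ s : ZMod (2*k),
      w s * (if p ∈ (if s = 0 then Bset k m else Tfam k m s) then 1 else 0) = 0) :
    ∀ s, w s = 0 := by
  have hm : 3*m < 2*k := by omega
  -- step 1: the alternating functional shows w 0 = 0
  have hsum_ind : ∀ (T : Finset (ZMod (2*k))),
      ∑ p ∈ T, eps k p = ∑ p : ZMod (2*k), eps k p * (if p ∈ T then 1 else 0) := by
    intro T
    simp only [mul_ite, mul_one, mul_zero]
    rw [Finset.sum_ite_mem, univ_inter]
  have hphi : ∑ s : ZMod (2*k),
      w s * (∑ p ∈ (if s = 0 then Bset k m else Tfam k m s), eps k p) = 0 := by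
    have h0 : ∑ p : ZMod (2*k), eps k p * (∑ s : ZMod (2*k),
        w s * (if p ∈ (if s = 0 then Bset k m else Tfam k m s) then 1 else 0)) = 0 := by
      rw [Finset.sum_congr rfl (fun p (_ : p ∈ univ) => by rw [hE p, mul_zero])]
      exact Finset.sum_const_zero
    calc ∑ s : ZMod (2*k), w s * (∑ p ∈ (if s = 0 then Bset k m else Tfam k m s), eps k p)
        = ∑ s : ZMod (2*k), ∑ p : ZMod (2*k),
            eps k p * (w s * (if p ∈ (if s = 0 then Bset k m else Tfam k m s) then 1 else 0)) := by
          refine Finset.sum_congr rfl (fun s _ => ?_)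
          rw [hsum_ind, mul_sum]
          refine Finset.sum_congr rfl (fun p _ => by ring)
      _ = ∑ p : ZMod (2*k), eps k p * (∑ s : ZMod (2*k),
            w s * (if p ∈ (if s = 0 then Bset k m else Tfam k m s) then 1 else 0)) := by
          rw [Finset.sum_comm]
          refine Finset.sum_congr rfl (fun p _ => ?_)
          rw [mul_sum]
      _ = 0 := h0
  have hw0 : w 0 = 0 := by
    rw [Finset.sum_eq_single (0 : ZMod (2*k))
      (fun s _ hs => by rw [if_neg hs, phi_Tfam hm hme]; ring)
      (fun h => absurd (mem_univ 0) h)] at hphi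
    rw [if_pos rfl, phi_Bset hmm hme hm2] at hphi
    linarith
  -- step 2: reduce to the pure Tfam system
  have hE2 : ∀ p, ∑ s : ZMod (2*k), w s * (if p ∈ Tfam k m s then 1 else 0) = 0 := by
    intro p
    have hcongr : ∑ s : ZMod (2*k), w s * (if p ∈ Tfam k m s then 1 else 0)
        = ∑ s : ZMod (2*k), w s * (if p ∈ (if s = 0 then Bset k m else Tfam k m s) then 1 else 0) := by
      refine Finset.sum_congr rfl (fun s _ => ?_)
      by_cases hs : s = 0
      · subst hs; rw [hw0]; ring
      · rw [if_neg hs]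
    rw [hcongr]
    exact hE p
  have hE' : ∀ p, ∑ i ∈ range m, w (p - ((3*i:ℕ):ZMod (2*k))) = 0 := fun p => by
    rw [← sum_Tfam hm]; exact hE2 p
  have hkey := keyshift (by omega) w hE'
  have hneg : ((3*(m-1):ℕ) : ZMod (2*k)) = -((5:ℕ) : ZMod (2*k)) := by
    have h0 : ((3*(m-1) + 5 : ℕ) : ZMod (2*k)) = 0 := by
      rw [show 3*(m-1) + 5 = 2*k by omega]; exact ZMod.natCast_self _
    push_cast at h0 ⊢
    linear_combination h0
  have hstep : ∀ q : ZMod (2*k), w q = w (q + ((2:ℕ) : ZMod (2*k))) := by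
    intro q
    have h := hkey (q - ((3:ℕ):ZMod (2*k)))
    rw [hneg] at h
    have l : q - ((3:ℕ):ZMod (2*k)) + ((3:ℕ):ZMod (2*k)) = q := by ring
    have r : q - ((3:ℕ):ZMod (2*k)) - (-((5:ℕ):ZMod (2*k))) = q + ((2:ℕ):ZMod (2*k)) := by
      push_cast; ring
    rw [l, r] at h
    exact h
  have hclass : ∀ t:ℕ, ∀ q : ZMod (2*k), w q = w (q + ((2*t:ℕ) : ZMod (2*k))) := by
    intro t
    induction t with
    | zero => intro q; norm_num
    | succ t ih =>
      intro q
      calc w q = w (q + ((2*t:ℕ) : ZMod (2*k))) := ih q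
      _ = w (q + ((2*t:ℕ) : ZMod (2*k)) + ((2:ℕ) : ZMod (2*k))) := hstep _
      _ = w (q + ((2*(t+1):ℕ) : ZMod (2*k))) := by
            congr 1
            push_cast
            ring
  have hnat : ∀ a : ℕ, w ((a:ℕ) : ZMod (2*k)) = w ((a % 2 : ℕ) : ZMod (2*k)) := by
    intro a
    have h := hclass (a/2) ((a % 2 : ℕ) : ZMod (2*k))
    have harg : ((a % 2:ℕ):ZMod (2*k)) + ((2*(a/2):ℕ):ZMod (2*k)) = ((a:ℕ):ZMod (2*k)) := by
      rw [← Nat.cast_add]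
      congr 1
      omega
    rw [harg] at h
    exact h.symm
  -- step 3: the odd class vanishes
  have hsum3 : ∑ j ∈ range m, w ((3*j : ℕ) : ZMod (2*k)) = 0 := by
    have h := hE' ((3*(m-1) : ℕ) : ZMod (2*k))
    rw [Finset.sum_congr rfl (fun i hi => ?_)] at h
    · rwa [sum_range_reflect (fun j => w ((3*j:ℕ):ZMod (2*k))) m] at h
    · rw [mem_range] at hi
      show w (((3*(m-1):ℕ) : ZMod (2*k)) - ((3*i:ℕ) : ZMod (2*k))) = w ((3*(m-1-i) : ℕ) : ZMod (2*k))
      congr 1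
      rw [← Nat.cast_sub (by omega : 3*i ≤ 3*(m-1))]
      congr 1
      omega
  have hterm : ∀ j ∈ range m, w ((3*j : ℕ) : ZMod (2*k))
      = (if j % 2 = 0 then w (((0:ℕ)):ZMod (2*k)) else w (((1:ℕ)):ZMod (2*k))) := by
    intro j _
    rw [hnat (3*j)]
    by_cases hj : j % 2 = 0
    · rw [if_pos hj]
      congr 2
      omega
    · rw [if_neg hj]
      congr 2
      omega
  rw [Finset.sum_congr rfl hterm, show m = 2*(m/2) by omega, sum_ite_parity] at hsum3
  have hz : w (((0:ℕ)):ZMod (2*k)) = 0 := by rw [Nat.cast_zero]; exact hw0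
  have hm2' : ((m/2 : ℕ) : ℝ) ≠ 0 := Nat.cast_ne_zero.mpr (by omega)
  have hw1 : w (((1:ℕ)):ZMod (2*k)) = 0 := by
    rw [hz] at hsum3
    have h9 := (mul_eq_zero.mp hsum3).resolve_left hm2'
    linarith
  intro s
  have hs : w s = w ((s.val : ℕ) : ZMod (2*k)) := by
    rw [(ZMod.natCast_rightInverse s : ((s.val:ℕ) : ZMod (2*k)) = s)]
  rw [hs, hnat s.val]
  rcases (by omega : s.val % 2 = 0 ∨ s.val % 2 = 1) with h | h <;> rw [h]
  · exact hz
  · exact hw1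

end fam

section main
variable {k m : ℕ} [NeZero k]

lemma validity_bound (hk : 4 ≤ k) (S : Finset (Fin k)) (M : Finset (Sym2 (Fin k)))
    (hTM : IsTotalMatching (SimpleGraph.cycleGraph k) S M) :
    3 * (S.card + M.card) ≤ 2*k := by
  rw [← card_Dset (by omega) hTM]
  exact gap3_card (by omega) _ (gap_Dset hk hTM)

lemma facet_generic (hk : 4 ≤ k) (hm : m = 2*k/3)
    (fam : ZMod (2*k) → Finset (ZMod (2*k)))
    (hgap : ∀ s, ∀ p ∈ fam s, p + 1 ∉ fam s ∧ p + 2 ∉ fam s)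
    (hcard : ∀ s, (fam s).card = m)
    (hinj : Function.Injective fam)
    (hker : ∀ w : ZMod (2*k) → ℝ,
      (∀ p, ∑ s : ZMod (2*k), w s * (if p ∈ fam s then 1 else 0) = 0) → ∀ s, w s = 0) :
    ∃ F : Finset (Finset (Fin k) × Finset (Sym2 (Fin k))),
      F.card = 2 * k ∧
      (∀ q ∈ F, IsTotalMatching (SimpleGraph.cycleGraph k) q.1 q.2 ∧
        q.1.card + q.2.card = 2 * k / 3) ∧
      AffineIndependent ℝ (fun q : F => charVec q.1.1 q.1.2) := by
  have hk3 : 3 ≤ k := by omega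
  set Q : ZMod (2*k) → Finset (Fin k) × Finset (Sym2 (Fin k)) :=
    fun s => (Sset k (fam s), Mset k (fam s)) with hQ
  have hrec : ∀ P P' : Finset (ZMod (2*k)),
      Sset k P = Sset k P' → Mset k P = Mset k P' → P = P' := by
    intro P P' hS hM
    ext p
    rcases (by omega : p.val % 2 = 0 ∨ p.val % 2 = 1) with hpar | hpar
    · have h1 : p ∈ P ↔ vert k p ∈ Sset k P := by rw [mem_Sset, encV_vert hpar]
      have h2 : p ∈ P' ↔ vert k p ∈ Sset k P' := by rw [mem_Sset, encV_vert hpar]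
      rw [h1, h2, hS]
    · have h1 : p ∈ P ↔ edgeAt k (vert k p) ∈ Mset k P := by
        rw [mem_Mset hk3, encE_vert hpar]
      have h2 : p ∈ P' ↔ edgeAt k (vert k p) ∈ Mset k P' := by
        rw [mem_Mset hk3, encE_vert hpar]
      rw [h1, h2, hM]
  have hQinj : Function.Injective Q := by
    intro s t h
    rw [hQ, Prod.mk.injEq] at h
    exact hinj (hrec _ _ h.1 h.2)
  refine ⟨(univ : Finset (ZMod (2*k))).image Q, ?_, ?_, ?_⟩
  · rw [Finset.card_image_of_injective _ hQinj, card_univ, ZMod.card]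
  · intro q hq
    rw [mem_image] at hq
    obtain ⟨s, _, rfl⟩ := hq
    refine ⟨totalMatching_of_gap3 hk (fam s) (hgap s), ?_⟩
    show (Sset k (fam s)).card + (Mset k (fam s)).card = 2*k/3
    rw [card_SM hk3, hcard s, hm]
  · have hmemQ : ∀ s : ZMod (2*k), Q s ∈ (univ : Finset (ZMod (2*k))).image Q :=
      fun s => mem_image_of_mem Q (mem_univ s)
    set e : ZMod (2*k) ≃ {x // x ∈ (univ : Finset (ZMod (2*k))).image Q} :=
      Equiv.ofBijective (fun s => ⟨Q s, hmemQ s⟩)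
        ⟨fun a b h => hQinj (congrArg Subtype.val h),
         fun q => by
          obtain ⟨s, _, hs⟩ := mem_image.mp q.2
          exact ⟨s, Subtype.ext hs⟩⟩ with he
    rw [← affineIndependent_equiv e]
    show AffineIndependent ℝ (fun s : ZMod (2*k) => charVec (Q s).1 (Q s).2)
    rw [affineIndependent_iff]
    intro t w hw0 hsum e' he'
    set w' : ZMod (2*k) → ℝ := fun s => if s ∈ t then w s else 0 with hw'
    have hsum' : ∑ s : ZMod (2*k), w' s • charVec (Q s).1 (Q s).2 = 0 := by
      rw [← hsum]
      rw [Finset.sum_congr rfl (fun s (_ : s ∈ univ) => by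
        rw [hw', ite_smul, zero_smul])]
      rw [Finset.sum_ite_mem, univ_inter]
    have hcoord : ∀ p : ZMod (2*k), ∑ s : ZMod (2*k), w' s * (if p ∈ fam s then 1 else 0) = 0 := by
      intro p
      rcases (by omega : p.val % 2 = 0 ∨ p.val % 2 = 1) with hpar | hpar
      · have h1 := congrArg (fun z : (Fin k → ℝ) × (Sym2 (Fin k) → ℝ) => z.1 (vert k p)) hsum'
        simp only [Prod.fst_sum, Finset.sum_apply, Prod.smul_fst, Pi.smul_apply,
          smul_eq_mul, Prod.fst_zero, Pi.zero_apply] at h1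
        have hterm : ∀ s ∈ (univ : Finset (ZMod (2*k))),
            w' s * (charVec (Q s).1 (Q s).2).1 (vert k p)
              = w' s * (if p ∈ fam s then 1 else 0) := by
          intro s _
          congr 1
          show (if vert k p ∈ Sset k (fam s) then (1:ℝ) else 0) = if p ∈ fam s then 1 else 0
          refine if_congr ?_ rfl rfl
          rw [mem_Sset, encV_vert hpar]
        rw [Finset.sum_congr rfl hterm] at h1
        exact h1
      · have h1 := congrArg
          (fun z : (Fin k → ℝ) × (Sym2 (Fin k) → ℝ) => z.2 (edgeAt k (vert k p))) hsum'
        simp only [Prod.snd_sum, Finset.sum_apply, Prod.smul_snd, Pi.smul_apply,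
          smul_eq_mul, Prod.snd_zero, Pi.zero_apply] at h1
        have hterm : ∀ s ∈ (univ : Finset (ZMod (2*k))),
            w' s * (charVec (Q s).1 (Q s).2).2 (edgeAt k (vert k p))
              = w' s * (if p ∈ fam s then 1 else 0) := by
          intro s _
          congr 1
          show (if edgeAt k (vert k p) ∈ Mset k (fam s) then (1:ℝ) else 0)
            = if p ∈ fam s then 1 else 0
          refine if_congr ?_ rfl rfl
          rw [mem_Mset hk3, encE_vert hpar]
        rw [Finset.sum_congr rfl hterm] at h1
        exact h1
    have h3 := hker w' hcoord e'
    have h4 : (if e' ∈ t then w e' else 0) = 0 := h3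
    rwa [if_pos he'] at h4

end main

end CCIF

/-- For `k ≥ 4` with `k ≡ 1, 2 (mod 3)`, the congruent-2k3 cycle inequality
`∑_v x_v + ∑_e y_e ≤ ⌊2k/3⌋` is valid for the total matching polytope of the cycle `C_k`
and facet-defining: there exist `2k` affinely independent characteristic vectors of total
matchings of `C_k` of cardinality exactly `⌊2k/3⌋`. -/
theorem congruent_cycle_inequality_facet (k : ℕ) (hk : 4 ≤ k)
    (hmod : k % 3 = 1 ∨ k % 3 = 2) :
    (∀ p ∈ totalMatchingPolytope (SimpleGraph.cycleGraph k),
      ∑ v : Fin k, p.1 v + ∑ e ∈ (SimpleGraph.cycleGraph k).edgeFinset, p.2 e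
        ≤ ((2 * k / 3 : ℕ) : ℝ)) ∧
    ∃ F : Finset (Finset (Fin k) × Finset (Sym2 (Fin k))),
      F.card = 2 * k ∧
      (∀ q ∈ F, IsTotalMatching (SimpleGraph.cycleGraph k) q.1 q.2 ∧
        q.1.card + q.2.card = 2 * k / 3) ∧
      AffineIndependent ℝ (fun q : F => charVec q.1.1 q.1.2) := by
  haveI : NeZero k := ⟨by omega⟩
  constructor
  · -- validity
    have hlin : IsLinearMap ℝ (fun q : (Fin k → ℝ) × (Sym2 (Fin k) → ℝ) =>
        ∑ v : Fin k, q.1 v + ∑ e ∈ (SimpleGraph.cycleGraph k).edgeFinset, q.2 e) := by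
      constructor
      · intro a b
        simp only [Prod.fst_add, Prod.snd_add, Pi.add_apply, Finset.sum_add_distrib]
        ring
      · intro c a
        simp only [Prod.smul_fst, Prod.smul_snd, Pi.smul_apply, smul_eq_mul]
        rw [← Finset.mul_sum, ← Finset.mul_sum]
        ring
    intro p hp
    have hsub : totalMatchingPolytope (SimpleGraph.cycleGraph k) ⊆
        {q : (Fin k → ℝ) × (Sym2 (Fin k) → ℝ) |
          (∑ v : Fin k, q.1 v + ∑ e ∈ (SimpleGraph.cycleGraph k).edgeFinset, q.2 e)
            ≤ ((2*k/3 : ℕ) : ℝ)} := by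
      apply convexHull_min _ (convex_halfSpace_le hlin _)
      rintro q ⟨S, M, hTM, rfl⟩
      show ∑ v : Fin k, (charVec S M).1 v
          + ∑ e ∈ (SimpleGraph.cycleGraph k).edgeFinset, (charVec S M).2 e ≤ _
      have hS : ∑ v : Fin k, (charVec S M).1 v = (S.card : ℝ) := by
        show (∑ v : Fin k, if v ∈ S then (1:ℝ) else 0) = _
        rw [Finset.sum_boole]
        congr 1
        have : Finset.univ.filter (fun v => v ∈ S) = S := by ext v; simp
        rw [this]
      have hM : ∑ e ∈ (SimpleGraph.cycleGraph k).edgeFinset, (charVec S M).2 e = (M.card : ℝ) := by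
        show (∑ e ∈ (SimpleGraph.cycleGraph k).edgeFinset, if e ∈ M then (1:ℝ) else 0) = _
        rw [Finset.sum_boole]
        congr 1
        have : (SimpleGraph.cycleGraph k).edgeFinset.filter (fun e => e ∈ M) = M := by
          ext e
          simp only [Finset.mem_filter, SimpleGraph.mem_edgeFinset, and_iff_right_iff_imp]
          intro he
          exact hTM.1 he
        rw [this]
      rw [hS, hM]
      have hb := CCIF.validity_bound hk S M hTM
      have hb2 : S.card + M.card ≤ 2*k/3 := by omega
      calc (S.card : ℝ) + M.card = ((S.card + M.card : ℕ) : ℝ) := by push_cast; ring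
        _ ≤ ((2*k/3 : ℕ) : ℝ) := Nat.cast_le.mpr hb2
    exact hsub hp
  · -- facet-defining
    set m := 2*k/3 with hmdef
    rcases hmod with h1 | h2
    · -- k ≡ 1 (mod 3): 2k = 3m+2, mixed family
      have hmm : 2*k = 3*m + 2 := by omega
      have hme : m % 2 = 0 := by omega
      have hm2 : 2 ≤ m := by omega
      refine CCIF.facet_generic hk rfl
        (fun s : ZMod (2*k) => if s = 0 then CCIF.Bset k m else CCIF.Tfam k m s) ?_ ?_ ?_ ?_
      · intro s
        by_cases hs : s = 0
        · rw [hs]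
          simp only [if_pos rfl]
          exact CCIF.gap_Bset (by omega) hmm hm2
        · simp only [if_neg hs]
          exact CCIF.gap_Tfam (by omega) (by omega) s
      · intro s
        by_cases hs : s = 0
        · rw [hs]
          simp only [if_pos rfl]
          exact CCIF.card_Bset hmm hm2
        · simp only [if_neg hs]
          exact CCIF.card_Tfam (by omega) s
      · intro s t h
        simp only at h
        by_cases hs : s = 0 <;> by_cases ht : t = 0
        · rw [hs, ht]
        · rw [if_pos hs, if_neg ht] at h
          exact absurd h.symm (CCIF.Tfam_ne_Bset hmm hm2 t)
        · rw [if_neg hs, if_pos ht] at h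
          exact absurd h (CCIF.Tfam_ne_Bset hmm hm2 s)
        · rw [if_neg hs, if_neg ht] at h
          exact CCIF.Tfam_inj (by omega) (by omega) (by omega) h
      · exact CCIF.kernel2 hmm hme hm2
    · -- k ≡ 2 (mod 3): 2k = 3m+1, pure shifted family
      have hmm : 2*k = 3*m + 1 := by omega
      refine CCIF.facet_generic hk rfl (CCIF.Tfam k m) ?_ ?_ ?_ ?_
      · exact fun s => CCIF.gap_Tfam (by omega) (by omega) s
      · exact fun s => CCIF.card_Tfam (by omega) s
      · exact fun s t h => CCIF.Tfam_inj (by omega) (by omega) (by omega) h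
      · exact CCIF.kernel1 hmm (by omega)
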